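/- Let (Λ, b) be a unimodular lattice and suppose ω₁ and ω₂ are both characteristic elements of Λ. Then b(ω₁,ω₁) ≡ b(ω₂,ω₂) (mod 8). -/

import Mathlib

/-- any two characteristic elements of a unimodular lattice have
norms congruent modulo 8. -/
theorem characteristic_norm_mod_eight
    (Λ : Type*) [AddCommGroup Λ] [Module ℤ Λ]
    (ι : Type*) [Fintype ι] [DecidableEq ι]
    (e : Module.Basis ι ℤ Λ)
    (b : Λ →ₗ[ℤ] Λ →ₗ[ℤ] ℤ) (hsymm : ∀ x y : Λ, b x y = b y x)
    (hdet : (Matrix.of fun i j : ι => b (e i) (e j)).det = 1 ∨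
            (Matrix.of fun i j : ι => b (e i) (e j)).det = -1)
    (ω₁ ω₂ : Λ)
    (h1 : ∀ lam : Λ, Int.ModEq 2 (b ω₁ lam) (b lam lam))
    (h2 : ∀ lam : Λ, Int.ModEq 2 (b ω₂ lam) (b lam lam)) :
    Int.ModEq 8 (b ω₁ ω₁) (b ω₂ ω₂) := by
  classical
  set v := ω₁ - ω₂ with hv
  set x : ι → ℤ := fun i => e.repr v i with hx
  have hbv : ∀ i, b v (e i) = ∑ j, x j * b (e j) (e i) := by
    intro i
    conv_lhs => rw [← e.sum_repr v]
    simp only [hx, map_sum, LinearMap.sum_apply, map_smul, LinearMap.smul_apply, smul_eq_mul]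
  have hmod : ∀ i, (2:ℤ) ∣ b v (e i) := by
    intro i
    have h12 : Int.ModEq 2 (b ω₁ (e i)) (b ω₂ (e i)) := (h1 (e i)).trans (h2 (e i)).symm
    have hd := Int.ModEq.dvd h12
    have hsub : b v (e i) = b ω₁ (e i) - b ω₂ (e i) := by simp [hv, map_sub]
    rw [hsub]; omega
  have hxeven : ∀ i, (2:ℤ) ∣ x i := by
    set M : Matrix ι ι (ZMod 2) :=
      (Matrix.of fun i j : ι => b (e i) (e j)).map (Int.cast : ℤ → ZMod 2) with hM
    have hdetM : IsUnit M.det := by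
      rw [hM, show (Int.cast : ℤ → ZMod 2) = ⇑(Int.castRingHom (ZMod 2)) from rfl,
        ← RingHom.mapMatrix_apply, ← RingHom.map_det]
      rcases hdet with h | h <;> simp [h]
    have hvm : Matrix.vecMul (fun i => ((x i : ℤ) : ZMod 2)) M = 0 := by
      funext i
      have hc : ((b v (e i) : ℤ) : ZMod 2) = 0 := by
        rw [ZMod.intCast_zmod_eq_zero_iff_dvd]
        exact_mod_cast hmod i
      have hb := hbv i
      have hz : ((∑ j, x j * b (e j) (e i) : ℤ) : ZMod 2) = 0 := by rw [← hb]; exact hc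
      simpa [Matrix.vecMul, dotProduct, hM] using hz
    have hzero : (fun i => ((x i : ℤ) : ZMod 2)) = 0 := by
      have h := congrArg (fun w => Matrix.vecMul w M⁻¹) hvm
      simpa [Matrix.vecMul_vecMul, Matrix.mul_nonsing_inv M hdetM] using h
    intro i
    have := congrFun hzero i
    exact (ZMod.intCast_zmod_eq_zero_iff_dvd _ 2).mp this
  set y : ι →₀ ℤ := (e.repr v).mapRange (fun n => n / 2) (by norm_num) with hy
  set μ : Λ := e.repr.symm y with hμdef
  have hv2 : μ + μ = v := by
    apply e.repr.injective
    rw [map_add, hμdef, LinearEquiv.apply_symm_apply]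
    ext i
    have := hxeven i
    simp only [hy, Finsupp.add_apply, Finsupp.mapRange_apply, hx] at *
    omega
  have hω : ω₁ = ω₂ + μ + μ := by
    rw [add_assoc, hv2, hv]; abel
  obtain ⟨k, hk⟩ := Int.ModEq.dvd (h2 μ)
  have hexp : b ω₁ ω₁ = b ω₂ ω₂ + 2 * b ω₂ μ + 2 * b μ ω₂ + 4 * b μ μ := by
    rw [hω]
    simp only [map_add, LinearMap.add_apply]
    ring
  have hs := hsymm μ ω₂
  rw [Int.ModEq] at *
  omega
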